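/- Let H be a Hilbert space and let A ⊂ B(H) be a unital C*-subalgebra which contains the ideal K of compact operators on H. Put S = K + ℂ·I (an operator system in A). Then for every unit vector ξ ∈ H, the vector state ω(a) = ⟨aξ, ξ⟩ on A is S-peaking; in fact it peaks on the rank-one orthogonal projection onto ℂξ, which belongs to S. -/

import Mathlib

set_option maxHeartbeats 1000000

open Filter Topology
open scoped ComplexOrder InnerProductSpace

/-- A state: a positive linear functional of norm one. -/
def IsState {B : Type*} [NormedRing B] [StarRing B] [NormedAlgebra ℂ B]
    (φ : B →L[ℂ] ℂ) : Prop :=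
  ‖φ‖ = 1 ∧ ∀ a : B, 0 ≤ φ (star a * a)

lemma quad_aux {r c : ℝ} (hc : 0 ≤ c) (h : ∀ t : ℝ, 0 ≤ 2 * t * r + t ^ 2 * c) : r = 0 := by
  by_contra hr
  have hc1 : (0:ℝ) < c + 1 := by linarith
  set t : ℝ := -r / (c + 1) with htdef
  have ht : t * (c + 1) = -r := div_mul_cancel₀ _ (ne_of_gt hc1)
  have h3 : 0 ≤ (2 * t * r + t ^ 2 * c) * (c + 1) ^ 2 :=
    mul_nonneg (h t) (by positivity)
  have h4 : (2 * t * r + t ^ 2 * c) * (c + 1) ^ 2 = -(r ^ 2 * (c + 2)) := by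
    calc (2 * t * r + t ^ 2 * c) * (c + 1) ^ 2
        = 2 * (t * (c + 1)) * (r * (c + 1)) + (t * (c + 1)) ^ 2 * c := by ring
      _ = 2 * (-r) * (r * (c + 1)) + (-r) ^ 2 * c := by rw [ht]
      _ = -(r ^ 2 * (c + 2)) := by ring
  rw [h4] at h3
  have hr2 : 0 < r ^ 2 := by positivity
  nlinarith

set_option linter.unusedSectionVars false
section
variable {B : Type*} [NormedRing B] [StarRing B] [NormedAlgebra ℂ B] [StarModule ℂ B]
variable (φ : B →L[ℂ] ℂ)

lemma pos_im (hpos : ∀ a : B, 0 ≤ φ (star a * a)) (a : B) : (φ (star a * a)).im = 0 := by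
  have := hpos a
  rw [Complex.le_def] at this
  exact this.2.symm

lemma pos_re (hpos : ∀ a : B, 0 ≤ φ (star a * a)) (a : B) : 0 ≤ (φ (star a * a)).re := by
  have := hpos a
  rw [Complex.le_def] at this
  simpa using this.1

lemma herm (hpos : ∀ a : B, 0 ≤ φ (star a * a)) (x y : B) :
    φ (star y * x) = starRingEnd ℂ (φ (star x * y)) := by
  have e1 : (φ (star x * y)).im + (φ (star y * x)).im = 0 := by
    have h := pos_im φ hpos (x + y)
    have hx := pos_im φ hpos x
    have hy := pos_im φ hpos y
    rw [star_add, add_mul, mul_add, mul_add] at h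
    simp only [map_add, Complex.add_im] at h
    linarith
  have e2 : (φ (star x * y)).re - (φ (star y * x)).re = 0 := by
    have h := pos_im φ hpos (x + (Complex.I : ℂ) • y)
    have hx := pos_im φ hpos x
    have hy := pos_im φ hpos y
    rw [star_add, star_smul, add_mul, mul_add, mul_add, smul_mul_assoc, smul_mul_assoc,
      mul_smul_comm, mul_smul_comm] at h
    simp only [map_add, map_smul, Complex.add_im, smul_eq_mul, smul_smul,
      Complex.star_def, Complex.conj_I] at h
    rw [Complex.mul_im, Complex.mul_im, Complex.mul_im] at h
    simp only [Complex.I_re, Complex.I_im, Complex.neg_re, Complex.neg_im,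
      Complex.mul_re, Complex.mul_im] at h
    nlinarith [h]
  apply Complex.ext
  · rw [sub_eq_zero] at e2
    simpa [Complex.conj_re] using e2.symm
  · simp only [Complex.conj_im]
    linarith

lemma null_left (hpos : ∀ a : B, 0 ≤ φ (star a * a)) (x : B) (hx : φ (star x * x) = 0)
    (y : B) : φ (star x * y) = 0 := by
  set u := φ (star x * y) with hu
  set c := φ (star y * y) with hc
  have key : ∀ s : ℂ, (φ (star (x + s • y) * (x + s • y))) =
      s * u + (starRingEnd ℂ s) * (starRingEnd ℂ u) + (s * starRingEnd ℂ s) * c := by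
    intro s
    rw [star_add, star_smul, add_mul, mul_add, mul_add, smul_mul_assoc, smul_mul_assoc,
      mul_smul_comm, mul_smul_comm]
    simp only [map_add, map_smul, smul_eq_mul, smul_smul, Complex.star_def]
    rw [hx, herm φ hpos x y, ← hu, ← hc]
    ring
  have hcim : c.im = 0 := pos_im φ hpos y
  have hcre : 0 ≤ c.re := pos_re φ hpos y
  have hre : u.re = 0 := by
    apply quad_aux hcre
    intro t
    have h := pos_re φ hpos (x + (t : ℂ) • y)
    rw [key (t : ℂ)] at h
    simp only [Complex.add_re, Complex.mul_re, Complex.conj_re, Complex.conj_im,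
      Complex.ofReal_re, Complex.ofReal_im, Complex.mul_im, Complex.add_im] at h
    nlinarith [h]
  have him : u.im = 0 := by
    have := quad_aux hcre (r := -u.im) ?_
    · linarith
    intro t
    have h := pos_re φ hpos (x + ((t : ℂ) * Complex.I) • y)
    rw [key _] at h
    simp only [Complex.add_re, Complex.mul_re, Complex.conj_re, Complex.conj_im,
      Complex.ofReal_re, Complex.ofReal_im, Complex.mul_im, Complex.add_im,
      Complex.I_re, Complex.I_im, map_mul, Complex.conj_I, Complex.neg_re, Complex.neg_im] at h
    nlinarith [h]
  exact Complex.ext hre him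
end

/-- let `A ⊆ B(H)` be a closed unital *-subalgebra containing the ideal of
compact operators, and put `S = K + ℂ·I`.  Then for every unit vector `ξ ∈ H` the vector
state `ω(a) = ⟪a ξ, ξ⟫` on `A` is `S`-peaking; indeed it peaks on the rank-one orthogonal
projection `p` onto `ℂ ξ`, a self-adjoint compact (hence in `S`) element of `A` of norm
one with `ω p = 1` and `|φ p| < 1` for every state `φ ≠ ω`. -/
theorem stmt15 {H : Type*} [NormedAddCommGroup H] [InnerProductSpace ℂ H] [CompleteSpace H]
    (A : StarSubalgebra ℂ (H →L[ℂ] H)) (hAclosed : IsClosed (A : Set (H →L[ℂ] H)))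
    (hK : ∀ T : H →L[ℂ] H, IsCompactOperator T → T ∈ A)
    (ξ : H) (hξ : ‖ξ‖ = 1)
    (p : H →L[ℂ] H) (hp : ∀ x : H, p x = ⟪ξ, x⟫_ℂ • ξ)
    (ω : ↥A →L[ℂ] ℂ) (hω : ∀ a : ↥A, ω a = ⟪ξ, (a : H →L[ℂ] H) ξ⟫_ℂ) :
    IsState ω ∧ ∃ hpA : p ∈ A, IsCompactOperator p ∧ IsSelfAdjoint p ∧ ‖p‖ = 1 ∧
      ω ⟨p, hpA⟩ = 1 ∧
      ∀ φ : ↥A →L[ℂ] ℂ, IsState φ → φ ≠ ω → ‖φ ⟨p, hpA⟩‖ < 1 := by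
  have hξ0 : ξ ≠ 0 := by
    intro h; rw [h, norm_zero] at hξ; exact one_ne_zero hξ.symm
  have : Nontrivial H := ⟨⟨ξ, 0, hξ0⟩⟩
  have hξ2 : ⟪ξ, ξ⟫_ℂ = 1 := by
    rw [inner_self_eq_norm_sq_to_K, hξ]; norm_num
  have hpξ : p ξ = ξ := by rw [hp, hξ2, one_smul]
  -- compactness
  have hcomp : IsCompactOperator p := by
    refine ⟨(fun c : ℂ => c • ξ) '' Metric.closedBall 0 1,
      (isCompact_closedBall 0 1).image (continuous_id.smul continuous_const), ?_⟩
    refine mem_of_superset (Metric.closedBall_mem_nhds 0 one_pos) (fun x hx => ?_)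
    refine ⟨⟪ξ, x⟫_ℂ, ?_, (hp x).symm⟩
    rw [Metric.mem_closedBall, dist_zero_right]
    calc ‖⟪ξ, x⟫_ℂ‖ ≤ ‖ξ‖ * ‖x‖ := norm_inner_le_norm ξ x
      _ ≤ 1 := by rw [hξ, one_mul]; simpa using hx
  -- self-adjointness
  have hsa : IsSelfAdjoint p := by
    rw [ContinuousLinearMap.isSelfAdjoint_iff_isSymmetric]
    intro x y
    simp [hp, inner_smul_left, inner_smul_right]
    ring
  -- norm one
  have hnorm : ‖p‖ = 1 := by
    refine le_antisymm (ContinuousLinearMap.opNorm_le_bound p zero_le_one fun x => ?_) ?_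
    · rw [hp, norm_smul, hξ, mul_one, one_mul]
      calc ‖⟪ξ, x⟫_ℂ‖ ≤ ‖ξ‖ * ‖x‖ := norm_inner_le_norm ξ x
        _ = ‖x‖ := by rw [hξ, one_mul]
    · have := p.le_opNorm ξ
      rw [hpξ, hξ, mul_one] at this
      exact this
  have hpA : p ∈ A := hK p hcomp
  have hone : ((1 : ↥A) : H →L[ℂ] H) = 1 := rfl
  have hnorm1 : ‖(1 : ↥A)‖ = 1 := by
    show ‖((1 : ↥A) : H →L[ℂ] H)‖ = 1
    rw [hone]; exact ContinuousLinearMap.norm_id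
  -- positivity of vector states
  have hvpos : ∀ a : ↥A, ω (star a * a) = (‖(a : H →L[ℂ] H) ξ‖ : ℂ) ^ 2 := by
    intro a
    rw [hω]
    have hc : ((star a * a : ↥A) : H →L[ℂ] H) ξ
        = ContinuousLinearMap.adjoint (a : H →L[ℂ] H) ((a : H →L[ℂ] H) ξ) := by
      rw [show ((star a * a : ↥A) : H →L[ℂ] H)
          = star (a : H →L[ℂ] H) * (a : H →L[ℂ] H) from rfl,
        ContinuousLinearMap.star_eq_adjoint]
      rfl
    rw [hc, ContinuousLinearMap.adjoint_inner_right, inner_self_eq_norm_sq_to_K]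
    norm_cast
  have hωstate : IsState ω := by
    constructor
    · refine le_antisymm (ContinuousLinearMap.opNorm_le_bound ω zero_le_one fun a => ?_) ?_
      · rw [hω, one_mul]
        calc ‖⟪ξ, (a : H →L[ℂ] H) ξ⟫_ℂ‖ ≤ ‖ξ‖ * ‖(a : H →L[ℂ] H) ξ‖ := norm_inner_le_norm _ _
          _ ≤ ‖ξ‖ * (‖(a : H →L[ℂ] H)‖ * ‖ξ‖) := by
              gcongr; exact (a : H →L[ℂ] H).le_opNorm ξ
          _ = ‖a‖ := by rw [hξ, one_mul, mul_one]; rfl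
      · have h1 : ω 1 = 1 := by
          rw [hω]; rw [hone]; simpa using hξ2
        have := ω.le_opNorm 1
        rw [h1, hnorm1, mul_one] at this
        simpa using this
    · intro a
      rw [hvpos a]
      rw [show ((‖(a : H →L[ℂ] H) ξ‖ : ℂ)) ^ 2 = ((‖(a : H →L[ℂ] H) ξ‖ ^ 2 : ℝ) : ℂ) by
        push_cast; ring]
      exact_mod_cast Complex.zero_le_real.mpr (sq_nonneg _)
  refine ⟨hωstate, hpA, hcomp, hsa, hnorm, ?_, ?_⟩
  · rw [hω]; show ⟪ξ, p ξ⟫_ℂ = 1; rw [hpξ, hξ2]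
  -- peaking
  set P : ↥A := ⟨p, hpA⟩ with hPdef
  have hPnorm : ‖P‖ = 1 := hnorm
  have hPstar : star P = P := Subtype.ext hsa
  have hPmul : P * P = P := by
    apply Subtype.ext
    show p * p = p
    ext x
    show p (p x) = p x
    conv_lhs => rw [hp x]
    rw [map_smul, hpξ, ← hp x]
  intro φ hφ hne
  by_contra hcon
  push_neg at hcon
  have hpos := hφ.2
  -- φ P is a real number in [0,1], so it equals 1
  have hPpos : 0 ≤ φ P := by
    have := hpos P
    rwa [hPstar, hPmul] at this
  rw [Complex.le_def] at hPpos
  have him : (φ P).im = 0 := hPpos.2.symm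
  have hre : 0 ≤ (φ P).re := by simpa using hPpos.1
  have habs_le : ‖φ P‖ ≤ 1 := by
    have := φ.le_opNorm P
    rw [hφ.1, one_mul, hPnorm] at this
    simpa using this
  have hz : φ P = ((φ P).re : ℂ) := Complex.ext rfl (by simp [him])
  have hφP : φ P = 1 := by
    have h1 : ‖φ P‖ = 1 := le_antisymm habs_le hcon
    rw [hz, Complex.norm_of_nonneg hre] at h1
    rw [hz, h1]; norm_cast
  -- q = 1 - P satisfies φ q = 0
  set q : ↥A := 1 - P with hqdef
  have hqstar : star q = q := by rw [hqdef, star_sub, star_one, hPstar]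
  have hqmul : q * q = q := by
    rw [hqdef, mul_sub, sub_mul, sub_mul, one_mul, mul_one, hPmul]
    abel
  have hqval : φ q = φ 1 - 1 := by rw [hqdef, map_sub, hφP]
  have hqpos : 0 ≤ φ q := by
    have := hpos q
    rwa [hqstar, hqmul] at this
  rw [Complex.le_def] at hqpos
  have hqim : (φ q).im = 0 := hqpos.2.symm
  have hqre : 0 ≤ (φ q).re := by simpa using hqpos.1
  have habs1 : ‖φ 1‖ ≤ 1 := by
    have := φ.le_opNorm 1
    rw [hφ.1, one_mul, hnorm1] at this
    simpa using this
  have hq0 : φ q = 0 := by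
    have h1 : φ 1 = φ q + 1 := by rw [hqval]; ring
    have h2 : ‖φ q + 1‖ ≤ 1 := h1 ▸ habs1
    have h3 : ((φ q).re + 1 : ℝ) ≤ ‖φ q + 1‖ := by
      calc ((φ q).re + 1 : ℝ) = (φ q + 1).re := by simp
        _ ≤ ‖φ q + 1‖ := Complex.re_le_norm _
    have h4 : (φ q).re = 0 := by linarith
    exact Complex.ext h4 hqim
  -- hence φ vanishes on q·A and A·q
  have hnullL : ∀ y : ↥A, φ (q * y) = 0 := by
    intro y
    have := null_left φ hpos q (by rw [hqstar, hqmul]; exact hq0) y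
    rwa [hqstar] at this
  have hnullR : ∀ y : ↥A, φ (y * q) = 0 := by
    intro y
    have h := herm φ hpos q (star y)
    rw [star_star, hqstar, hnullL (star y)] at h
    rw [h, map_zero]
  -- compression identity
  have hPaP : ∀ a : ↥A, P * a * P = ω a • P := by
    intro a
    apply Subtype.ext
    show p * (a : H →L[ℂ] H) * p = ω a • p
    ext x
    show p ((a : H →L[ℂ] H) (p x)) = ω a • p x
    rw [hω a, hp x, map_smul, map_smul, hp ((a : H →L[ℂ] H) ξ)]
    rw [smul_comm]
  have hφω : φ = ω := by
    apply ContinuousLinearMap.ext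
    intro a
    have hdec : a = q * a + (P * a) * q + P * a * P := by
      rw [hqdef]
      noncomm_ring
    calc φ a = φ (q * a + (P * a) * q + P * a * P) := by rw [← hdec]
      _ = φ (q * a) + φ ((P * a) * q) + φ (P * a * P) := by rw [map_add, map_add]
      _ = φ (P * a * P) := by rw [hnullL, hnullR]; ring
      _ = φ (ω a • P) := by rw [hPaP]
      _ = ω a * φ P := by rw [map_smul, smul_eq_mul]
      _ = ω a := by rw [hφP, mul_one]
  exact hne hφω
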